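/- Let m ≥ 1 be an integer and let q be a power of 2, and let M = max{ L_{m,q}(m', ℘) : m' ∈ {0, ..., m} and ℘ a signed partition of m - m' }. Suppose m' ∈ {0, ..., m} and ℘ = (d_1^{ε_1}, ..., d_ℓ^{ε_ℓ}) is a signed partition of m - m' with pairwise distinct parts (for i ≠ j one has (d_i, ε_i) ≠ (d_j, ε_j)) such that L_{m,q}(m', ℘) = M. Then for every two distinct indices i, j ∈ {1, ..., ℓ}, gcd(q^{d_i} - ε_i, q^{d_j} - ε_j) = 1. -/

import Mathlib

/-- A signed partition of `n`: a list of parts `(d, ε)` with `d > 0`, where `ε = true`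
encodes sign `+1` and `ε = false` encodes sign `-1`, the `d`'s summing to `n`. -/
def IsSignedPartition (n : ℕ) (P : List (ℕ × Bool)) : Prop :=
  (∀ p ∈ P, 0 < p.1) ∧ (P.map Prod.fst).sum = n

/-- The value `q^d - ε` associated to a signed part `(d, ε)`. -/
def partVal (q : ℕ) (p : ℕ × Bool) : ℕ :=
  if p.2 then q ^ p.1 - 1 else q ^ p.1 + 1

/-- `L_{m,q}(m', ℘) = 2^⌈log₂(2m')⌉ · lcm(q^{d₁} - ε₁, …, q^{d_ℓ} - ε_ℓ)`, with the
conventions that the power of two is `1` when `m' = 0` and the empty lcm is `1`. -/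
def Lfun (q mp : ℕ) (P : List (ℕ × Bool)) : ℕ :=
  2 ^ Nat.clog 2 (2 * mp) * (P.map (partVal q)).foldr Nat.lcm 1

lemma dvd_foldr_lcm {l : List ℕ} {x : ℕ} (h : x ∈ l) : x ∣ l.foldr Nat.lcm 1 := by
  induction l with
  | nil => simp at h
  | cons a l ih =>
    rcases List.mem_cons.1 h with rfl | h
    · exact Nat.dvd_lcm_left _ _
    · exact (ih h).trans (Nat.dvd_lcm_right _ _)

lemma foldr_lcm_dvd {l : List ℕ} {N : ℕ} (h : ∀ x ∈ l, x ∣ N) : l.foldr Nat.lcm 1 ∣ N := by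
  induction l with
  | nil => simpa using one_dvd N
  | cons a l ih => exact Nat.lcm_dvd (h a (by simp)) (ih fun x hx => h x (by simp [hx]))

lemma prod_Icc_bound {q : ℕ} (hq : 2 ≤ q) (D : ℕ) (hD : 1 ≤ D) :
    (∏ d ∈ Finset.Icc 1 D, (q ^ d + 1)) * q ^ D + 3 * q ^ (∑ d ∈ Finset.Icc 1 D, d)
      ≤ 3 * q ^ (∑ d ∈ Finset.Icc 1 D, d) * q ^ D := by
  induction D, hD using Nat.le_induction with
  | base => simp [Finset.Icc_self]; nlinarith
  | succ D hD ih =>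
    rw [Finset.prod_Icc_succ_top (by omega), Finset.sum_Icc_succ_top (by omega)]
    set F := ∏ d ∈ Finset.Icc 1 D, (q ^ d + 1) with hF
    set S := q ^ (∑ d ∈ Finset.Icc 1 D, d) with hS
    set x := q ^ D with hx
    have hx1 : 1 ≤ x := Nat.one_le_pow _ _ (by omega)
    have hS1 : 1 ≤ S := Nat.one_le_pow _ _ (by omega)
    have e1 : q ^ ((∑ d ∈ Finset.Icc 1 D, d) + (D + 1)) = S * (x * q) := by
      rw [pow_add, pow_succ, hS, hx]
    have e2 : q ^ (D + 1) = x * q := by rw [pow_succ, hx]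
    rw [e1, e2]
    have hF3S : F ≤ 3 * S := by
      have h0 : F * x ≤ 3 * S * x := le_trans (Nat.le_add_right _ _) ih
      exact Nat.le_of_mul_le_mul_right (by linarith) (by omega)
    have h1 := Nat.mul_le_mul_right (x*q*q) ih
    have h2 : F + 3 * S ≤ 3 * S * q := by nlinarith
    have h3 := Nat.mul_le_mul_right (x*q) h2
    nlinarith [h1, h3]

lemma prod_finset_bound {q : ℕ} (hq : 2 ≤ q) (T : Finset ℕ) (hT : ∀ x ∈ T, 1 ≤ x) :
    (∏ d ∈ T, (q ^ d + 1)) ≤ 3 * q ^ (∑ d ∈ T, d) := by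
  rcases T.eq_empty_or_nonempty with rfl | hne
  · simp
  · obtain ⟨x0, hx0⟩ := hne
    set D := ∑ d ∈ T, d with hD
    have hsub : T ⊆ Finset.Icc 1 D := by
      intro x hx
      rw [Finset.mem_Icc]
      exact ⟨hT x hx, Finset.single_le_sum (f := fun d => d) (fun i _ => Nat.zero_le i) hx⟩
    have hD1 : 1 ≤ D := le_trans (hT x0 hx0)
      (Finset.single_le_sum (f := fun d => d) (fun i _ => Nat.zero_le i) hx0)
    have h0 := prod_Icc_bound hq D hD1
    have key : (∏ d ∈ Finset.Icc 1 D, (q ^ d + 1)) ≤ 3 * q ^ (∑ d ∈ Finset.Icc 1 D, d) := by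
      have hxp : 0 < q ^ D := Nat.pow_pos (by omega)
      exact Nat.le_of_mul_le_mul_right (le_trans (Nat.le_add_right _ _) h0) hxp
    have hsd := Finset.prod_sdiff (f := fun d => q ^ d + 1) hsub
    have hss := Finset.sum_sdiff (f := fun d => d) hsub
    have h2 : q ^ (∑ d ∈ Finset.Icc 1 D \ T, d) ≤ ∏ d ∈ Finset.Icc 1 D \ T, (q ^ d + 1) := by
      rw [← Finset.prod_pow_eq_pow_sum]
      exact Finset.prod_le_prod' (fun i _ => Nat.le_succ _)
    have h3 : (∏ d ∈ T, (q ^ d + 1)) * q ^ (∑ d ∈ Finset.Icc 1 D \ T, d)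
        ≤ 3 * q ^ (∑ d ∈ T, d) * q ^ (∑ d ∈ Finset.Icc 1 D \ T, d) := by
      calc (∏ d ∈ T, (q ^ d + 1)) * q ^ (∑ d ∈ Finset.Icc 1 D \ T, d)
          ≤ (∏ d ∈ T, (q ^ d + 1)) * ∏ d ∈ Finset.Icc 1 D \ T, (q ^ d + 1) :=
            Nat.mul_le_mul_left _ h2
        _ = ∏ d ∈ Finset.Icc 1 D, (q ^ d + 1) := by rw [← hsd, mul_comm]
        _ ≤ 3 * q ^ (∑ d ∈ Finset.Icc 1 D, d) := key
        _ = 3 * q ^ (∑ d ∈ T, d) * q ^ (∑ d ∈ Finset.Icc 1 D \ T, d) := by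
            rw [← hss, mul_assoc, ← pow_add, add_comm]
    exact Nat.le_of_mul_le_mul_right h3 (Nat.pow_pos (by omega))

lemma prod_list_bound {q : ℕ} (hq : 2 ≤ q) (t : List ℕ) (hnd : t.Nodup)
    (h1 : ∀ x ∈ t, 1 ≤ x) :
    (t.map (fun d => q ^ d + 1)).prod ≤ 3 * q ^ t.sum := by
  classical
  have hp := List.prod_toFinset (l := t) (fun d => q ^ d + 1) hnd
  have hs : ∑ d ∈ t.toFinset, d = t.sum := by
    have := List.sum_toFinset (l := t) (fun d => d) hnd
    simpa using this
  rw [← hp, ← hs]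
  exact prod_finset_bound hq _ (fun x hx => h1 x (List.mem_toFinset.1 hx))

lemma prodT {q : ℕ} (l : List (ℕ × Bool)) (h : ∀ p ∈ l, p.2 = true) :
    (l.map (partVal q)).prod ≤ q ^ (l.map Prod.fst).sum := by
  induction l with
  | nil => simp
  | cons p l ih =>
    simp only [List.map_cons, List.prod_cons, List.sum_cons, pow_add]
    have h2 : partVal q p ≤ q ^ p.1 := by
      have := h p (List.mem_cons_self); simp [partVal, this]
    exact Nat.mul_le_mul h2 (ih fun p hp => h p (List.mem_cons_of_mem _ hp))

lemma prod_partVal_bound {q : ℕ} (hq : 2 ≤ q) (P : List (ℕ × Bool)) (hnd : P.Nodup)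
    (hpos : ∀ p ∈ P, 0 < p.1) :
    (P.map (partVal q)).prod ≤ 3 * q ^ (P.map Prod.fst).sum := by
  classical
  have hperm := List.filter_append_perm (fun p => p.2) P
  set A := P.filter (fun p => p.2) with hA
  set B := P.filter (fun p => !p.2) with hB
  have hprodeq : (P.map (partVal q)).prod = (A.map (partVal q)).prod * (B.map (partVal q)).prod := by
    rw [← (hperm.map (partVal q)).prod_eq, List.map_append, List.prod_append]
  have hsumeq : (P.map Prod.fst).sum = (A.map Prod.fst).sum + (B.map Prod.fst).sum := by
    rw [← (hperm.map Prod.fst).sum_eq, List.map_append, List.sum_append]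
  -- B: all false, fsts nodup
  have hBf : ∀ p ∈ B, p.2 = false := by
    intro p hp
    have := List.of_mem_filter hp
    simpa using this
  have hBnd : (B.map Prod.fst).Nodup := by
    have hBnodup : B.Nodup := hnd.sublist (List.filter_sublist)
    refine hBnodup.map_on ?_
    intro x hx y hy hxy
    have := hBf x hx; have := hBf y hy
    exact Prod.ext hxy (by simp [hBf x hx, hBf y hy])
  have hBval : (B.map (partVal q)).prod = ((B.map Prod.fst).map (fun d => q ^ d + 1)).prod := by
    rw [List.map_map]
    congr 1
    refine List.map_congr_left ?_
    intro p hp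
    simp [partVal, hBf p hp]
  have hBbound : (B.map (partVal q)).prod ≤ 3 * q ^ (B.map Prod.fst).sum := by
    rw [hBval]
    have := prod_list_bound hq (B.map Prod.fst) hBnd ?_
    · simpa using this
    · intro x hx
      obtain ⟨p, hp, rfl⟩ := List.mem_map.1 hx
      exact hpos p (List.mem_of_mem_filter hp)
  have hAbound : (A.map (partVal q)).prod ≤ q ^ (A.map Prod.fst).sum := by
    refine prodT _ ?_
    intro p hp
    simpa using List.of_mem_filter hp
  calc (P.map (partVal q)).prod
      = (A.map (partVal q)).prod * (B.map (partVal q)).prod := hprodeq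
    _ ≤ q ^ (A.map Prod.fst).sum * (3 * q ^ (B.map Prod.fst).sum) := Nat.mul_le_mul hAbound hBbound
    _ = 3 * q ^ (P.map Prod.fst).sum := by rw [hsumeq, pow_add]; ring

/-- Claim 3 in the proof of Theorem 2.2: if L_m,q(m', ℘) attains the maximum M and the
parts of ℘ are pairwise distinct, then the numbers q^(d_i) - ε_i are pairwise coprime. -/
theorem max_Lfun_parts_coprime (f q m M : ℕ) (hf : 1 ≤ f) (hq : q = 2 ^ f) (hm : 1 ≤ m)
    (hM : IsGreatest {L : ℕ | ∃ mp ≤ m, ∃ P : List (ℕ × Bool),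
      IsSignedPartition (m - mp) P ∧ Lfun q mp P = L} M)
    (mp : ℕ) (hmp : mp ≤ m) (P : List (ℕ × Bool)) (hP : IsSignedPartition (m - mp) P)
    (hnd : ∀ i j : Fin P.length, i ≠ j → P.get i ≠ P.get j)
    (hL : Lfun q mp P = M) :
    ∀ i j : Fin P.length, i ≠ j →
      Nat.gcd (partVal q (P.get i)) (partVal q (P.get j)) = 1 := by
  intro i j hij
  by_contra hg1
  have hq2 : 2 ≤ q := by
    subst hq
    calc (2:ℕ) = 2 ^ 1 := (pow_one 2).symm
    _ ≤ 2 ^ f := Nat.pow_le_pow_right (by norm_num) hf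
  have hqeven : 2 ∣ q := by subst hq; exact dvd_pow_self 2 (by omega)
  have hndP : P.Nodup := by
    rw [List.nodup_iff_injective_get]
    intro a b h
    by_contra hne
    exact hnd a b hne h
  set p := P.get i with hp
  set r := P.get j with hr
  have hpr : p ≠ r := hnd i j hij
  have hpmem : p ∈ P := by rw [hp]; exact List.get_mem P i
  have hrmem : r ∈ P := by rw [hr]; exact List.get_mem P j
  obtain ⟨s1, t1, heq1⟩ := List.append_of_mem hpmem
  have hperm1 : P.Perm (p :: (s1 ++ t1)) := by rw [heq1]; exact List.perm_middle
  have hr2 : r ∈ s1 ++ t1 := by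
    have h9 : r ∈ s1 ++ p :: t1 := heq1 ▸ hrmem
    rw [List.mem_append] at h9 ⊢
    rcases h9 with h9 | h9
    · exact Or.inl h9
    · rcases List.mem_cons.1 h9 with h9 | h9
      · exact absurd h9.symm hpr
      · exact Or.inr h9
  obtain ⟨s2, t2, heq2⟩ := List.append_of_mem hr2
  have hperm : P.Perm (p :: r :: (s2 ++ t2)) :=
    hperm1.trans (List.Perm.cons p (by rw [heq2]; exact List.perm_middle))
  set a := partVal q p with ha
  set b := partVal q r with hb
  set rest := (s2 ++ t2).map (partVal q) with hrest
  set l := P.map (partVal q) with hl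
  have hlperm : l.Perm (a :: b :: rest) := hperm.map (partVal q)
  -- positivity of all values
  have hvpos : ∀ s : ℕ × Bool, s ∈ P → 0 < partVal q s := by
    intro s hs
    have hd : 0 < s.1 := hP.1 s hs
    have h2 : 2 ≤ q ^ s.1 := le_trans hq2 (Nat.le_self_pow (by omega) q)
    unfold partVal
    split <;> omega
  have hvalpos : ∀ x ∈ l, 0 < x := by
    intro x hx
    obtain ⟨s, hs, rfl⟩ := List.mem_map.1 hx
    exact hvpos s hs
  -- a is odd
  have haodd : ¬ 2 ∣ a := by
    have hd : 0 < p.1 := hP.1 p hpmem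
    have h2 : 2 ∣ q ^ p.1 := hqeven.trans (dvd_pow_self q (by omega))
    have h3 : 2 ≤ q ^ p.1 := le_trans hq2 (Nat.le_self_pow (by omega) q)
    rw [ha]
    unfold partVal
    split <;> omega
  set g := Nat.gcd a b with hg
  have hg3 : 3 ≤ g := by
    have hgd : g ∣ a := Nat.gcd_dvd_left a b
    have hg0 : g ≠ 0 := by
      intro h0
      rw [h0] at hgd
      have := Nat.eq_zero_of_zero_dvd hgd
      have := hvpos p hpmem
      omega
    have hg2 : ¬ 2 ∣ g := fun h => haodd (h.trans hgd)
    omega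
  -- lcm bound
  set Lc := l.foldr Nat.lcm 1 with hLc
  have hLcdvd : Lc ∣ Nat.lcm (Nat.lcm a b) rest.prod := by
    apply foldr_lcm_dvd
    intro x hx
    rcases List.mem_cons.1 (hlperm.mem_iff.1 hx) with rfl | hx'
    · exact (Nat.dvd_lcm_left a b).trans (Nat.dvd_lcm_left _ _)
    · rcases List.mem_cons.1 hx' with rfl | hx''
      · exact (Nat.dvd_lcm_right a b).trans (Nat.dvd_lcm_left _ _)
      · exact (List.dvd_prod hx'').trans (Nat.dvd_lcm_right _ _)
  have h5 : Nat.lcm (Nat.lcm a b) rest.prod ∣ Nat.lcm a b * rest.prod :=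
    Nat.lcm_dvd (dvd_mul_right _ _) (dvd_mul_left _ _)
  have h6 : Lc * g ∣ l.prod := by
    have h7 : Lc * g ∣ (Nat.lcm a b * rest.prod) * g :=
      mul_dvd_mul (hLcdvd.trans h5) dvd_rfl
    have e : (Nat.lcm a b * rest.prod) * g = l.prod := by
      rw [hlperm.prod_eq, List.prod_cons, List.prod_cons, ← mul_assoc,
        ← Nat.gcd_mul_lcm a b]
      ring
    rwa [e] at h7
  have hprodpos : 0 < l.prod := List.prod_pos hvalpos
  have hLc3 : Lc * 3 ≤ l.prod :=
    le_trans (Nat.mul_le_mul_left Lc hg3) (Nat.le_of_dvd hprodpos h6)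
  set n := (P.map Prod.fst).sum with hn
  have hbound : l.prod ≤ 3 * q ^ n := prod_partVal_bound hq2 P hndP hP.1
  have hLcq : Lc ≤ q ^ n := by
    have h8 : Lc * 3 ≤ q ^ n * 3 := by
      have := le_trans hLc3 hbound
      omega
    exact Nat.le_of_mul_le_mul_right h8 (by omega)
  -- n ≥ 1
  have hn1 : 1 ≤ n := by
    have hsum := (hperm.map Prod.fst).sum_eq
    simp only [List.map_cons, List.sum_cons] at hsum
    have := hP.1 p hpmem
    omega
  -- the candidate partition [(n, false)]
  have hnval : n = m - mp := hP.2
  have hmem : Lfun q mp [(n, false)] ∈ {L : ℕ | ∃ mp ≤ m, ∃ P : List (ℕ × Bool),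
      IsSignedPartition (m - mp) P ∧ Lfun q mp P = L} := by
    refine ⟨mp, hmp, [(n, false)], ⟨?_, ?_⟩, rfl⟩
    · intro s hs
      simp only [List.mem_singleton] at hs
      subst hs
      exact hn1
    · simp [hnval]
  have hle := hM.2 hmem
  have hcand : Lfun q mp [(n, false)] = 2 ^ Nat.clog 2 (2 * mp) * (q ^ n + 1) := by
    simp [Lfun, partVal, Nat.lcm_one_right]
  have hPval : Lfun q mp P = 2 ^ Nat.clog 2 (2 * mp) * Lc := rfl
  have hpow : 0 < 2 ^ Nat.clog 2 (2 * mp) := Nat.pow_pos (by norm_num)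
  have hlt : Lfun q mp P < Lfun q mp [(n, false)] := by
    rw [hcand, hPval]
    exact Nat.mul_lt_mul_of_le_of_lt (le_refl (2 ^ Nat.clog 2 (2 * mp)))
      (lt_of_le_of_lt hLcq (Nat.lt_succ_self _)) hpow
  omega
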